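/- Let N ≥ 2 be an integer, R > 0, p > 0, and let f : [0,∞) → ℝ be a C¹, nondecreasing function with f(t) > 0 for all t > 0. Let (u,v) be a positive radial solution of Δu = v^p, Δv = f(|∇u|) on B_R. Then u'(r) > 0 and v'(r) > 0 for all 0 < r < R, and moreover v(r)^p / N ≤ u''(r) ≤ v(r)^p and f(u'(r)) / N ≤ v''(r) ≤ f(u'(r)) for all 0 < r < R. -/

import Mathlib

open Set Filter Topology

private lemma slope_deriv_nonneg (f : ℝ → ℝ)
    (hfmono : ∀ s t : ℝ, 0 ≤ s → s ≤ t → f s ≤ f t)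
    {t d : ℝ} (ht : 0 < t) (hd : HasDerivAt f d t) : 0 ≤ d := by
  rw [hasDerivAt_iff_tendsto_slope] at hd
  have h2 : Filter.Tendsto (slope f t) (𝓝[>] t) (𝓝 d) :=
    hd.mono_left (nhdsWithin_mono t fun x hx => ne_of_gt hx)
  refine ge_of_tendsto h2 ?_
  filter_upwards [self_mem_nhdsWithin] with x hx
  have h1 : f t ≤ f x := hfmono t x ht.le (le_of_lt hx)
  rw [slope_def_field]
  exact div_nonneg (by linarith) (by simp only [mem_Ioi] at hx; linarith)

private lemma pos_of_deriv_pos {R : ℝ} (g : ℝ → ℝ)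
    (hg : ContinuousOn g (Set.Ico 0 R)) (hg0 : g 0 = 0)
    (hder : ∀ x ∈ Set.Ioo (0:ℝ) R, ∃ d, 0 < d ∧ HasDerivAt g d x) :
    ∀ r ∈ Set.Ioo (0:ℝ) R, 0 < g r := by
  have hs : StrictMonoOn g (Set.Ico 0 R) := by
    refine strictMonoOn_of_deriv_pos (convex_Ico 0 R) hg ?_
    rw [interior_Ico]
    intro x hx
    obtain ⟨d, hd, hdd⟩ := hder x hx
    rw [hdd.deriv]; exact hd
  intro r hr
  have h0 : (0:ℝ) ∈ Set.Ico (0:ℝ) R := ⟨le_refl 0, hr.1.trans hr.2⟩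
  have := hs h0 ⟨hr.1.le, hr.2⟩ hr.1
  rwa [hg0] at this

private lemma nonneg_of_deriv_nonneg {R : ℝ} (g : ℝ → ℝ)
    (hg : ContinuousOn g (Set.Ico 0 R)) (hg0 : g 0 = 0)
    (hder : ∀ x ∈ Set.Ioo (0:ℝ) R, ∃ d, 0 ≤ d ∧ HasDerivAt g d x) :
    ∀ r ∈ Set.Ioo (0:ℝ) R, 0 ≤ g r := by
  have hs : MonotoneOn g (Set.Ico 0 R) := by
    refine monotoneOn_of_deriv_nonneg (convex_Ico 0 R) hg ?_ ?_
    · rw [interior_Ico]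
      intro x hx
      obtain ⟨d, _, hdd⟩ := hder x hx
      exact hdd.differentiableAt.differentiableWithinAt
    · rw [interior_Ico]
      intro x hx
      obtain ⟨d, hd, hdd⟩ := hder x hx
      rw [hdd.deriv]; exact hd
  intro r hr
  have h0 : (0:ℝ) ∈ Set.Ico (0:ℝ) R := ⟨le_refl 0, hr.1.trans hr.2⟩
  have := hs h0 ⟨hr.1.le, hr.2⟩ hr.1.le
  rwa [hg0] at this

/-- `(u, v)` is a positive radial solution of `Δu = v^p`, `Δv = f(|∇u|)` on the ball `B_R`,
written in radial coordinates. -/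
def IsPositiveRadialSol (N : ℕ) (R p : ℝ) (f : ℝ → ℝ) (u v : ℝ → ℝ) : Prop :=
  ContDiffOn ℝ 2 u (Set.Ico 0 R) ∧ ContDiffOn ℝ 2 v (Set.Ico 0 R) ∧
  (∀ r ∈ Set.Ico (0:ℝ) R, 0 < u r ∧ 0 < v r) ∧
  deriv u 0 = 0 ∧ deriv v 0 = 0 ∧
  (∀ r ∈ Set.Ioo (0:ℝ) R,
    deriv (deriv u) r + ((N : ℝ) - 1) / r * deriv u r = v r ^ p) ∧
  (∀ r ∈ Set.Ioo (0:ℝ) R,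
    deriv (deriv v) r + ((N : ℝ) - 1) / r * deriv v r = f |deriv u r|)

/-- For a positive radial solution `(u, v)` of `Δu = v^p`, `Δv = f(|∇u|)` on `B_R`:
`u' > 0`, `v' > 0`, `v^p/N ≤ u'' ≤ v^p` and `f(u')/N ≤ v'' ≤ f(u')` on `(0, R)`. -/
theorem monotonicity_and_second_deriv_bounds (N : ℕ) (hN : 2 ≤ N) (R p : ℝ)
    (hR : 0 < R) (hp : 0 < p)
    (f : ℝ → ℝ) (hf : ContDiffOn ℝ 1 f (Set.Ici 0))
    (hfmono : ∀ s t : ℝ, 0 ≤ s → s ≤ t → f s ≤ f t)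
    (hfpos : ∀ t : ℝ, 0 < t → 0 < f t)
    (u v : ℝ → ℝ) (huv : IsPositiveRadialSol N R p f u v) :
    ∀ r ∈ Set.Ioo (0:ℝ) R,
      0 < deriv u r ∧ 0 < deriv v r ∧
      v r ^ p / N ≤ deriv (deriv u) r ∧ deriv (deriv u) r ≤ v r ^ p ∧
      f (deriv u r) / N ≤ deriv (deriv v) r ∧ deriv (deriv v) r ≤ f (deriv u r) := by
  obtain ⟨hu, hv, hpos, hu0, hv0, hequ, heqv⟩ := huv
  have hN' : (2:ℝ) ≤ (N:ℝ) := by exact_mod_cast hN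
  have hN0 : (N:ℝ) ≠ 0 := by linarith
  have hIO : Set.Ioo (0:ℝ) R ⊆ Set.Ico 0 R := Set.Ioo_subset_Ico_self
  have hnhds : ∀ r ∈ Set.Ioo (0:ℝ) R, Set.Ico (0:ℝ) R ∈ 𝓝 r := fun r hr =>
    mem_nhds_iff.2 ⟨Set.Ioo 0 R, hIO, isOpen_Ioo, hr⟩
  have hdu : ∀ r ∈ Set.Ioo (0:ℝ) R, HasDerivAt (deriv u) (deriv (deriv u) r) r := by
    intro r hr
    have h1 : ContDiffOn ℝ 1 (deriv u) (Set.Ioo 0 R) :=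
      (hu.mono hIO).deriv_of_isOpen isOpen_Ioo (by norm_num)
    exact ((h1.contDiffAt (isOpen_Ioo.mem_nhds hr)).differentiableAt one_ne_zero).hasDerivAt
  have hdv : ∀ r ∈ Set.Ioo (0:ℝ) R, HasDerivAt (deriv v) (deriv (deriv v) r) r := by
    intro r hr
    have h1 : ContDiffOn ℝ 1 (deriv v) (Set.Ioo 0 R) :=
      (hv.mono hIO).deriv_of_isOpen isOpen_Ioo (by norm_num)
    exact ((h1.contDiffAt (isOpen_Ioo.mem_nhds hr)).differentiableAt one_ne_zero).hasDerivAt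
  have hUD := uniqueDiffOn_Ico (0:ℝ) R
  have hu1c : ContinuousOn (derivWithin u (Set.Ico 0 R)) (Set.Ico 0 R) :=
    hu.continuousOn_derivWithin hUD (by norm_num)
  have hv1c : ContinuousOn (derivWithin v (Set.Ico 0 R)) (Set.Ico 0 R) :=
    hv.continuousOn_derivWithin hUD (by norm_num)
  have hu1 : ∀ r ∈ Set.Ioo (0:ℝ) R, derivWithin u (Set.Ico 0 R) r = deriv u r :=
    fun r hr => derivWithin_of_mem_nhds (hnhds r hr)
  have hv1 : ∀ r ∈ Set.Ioo (0:ℝ) R, derivWithin v (Set.Ico 0 R) r = deriv v r :=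
    fun r hr => derivWithin_of_mem_nhds (hnhds r hr)
  have hcast : ((N-1 : ℕ):ℝ) = (N:ℝ) - 1 := by
    rw [Nat.cast_sub (by omega : 1 ≤ N), Nat.cast_one]
  -- general computation of the derivative of `s ↦ s^(N-1) * w'(s)`
  have hWd : ∀ w : ℝ → ℝ, (∀ r ∈ Set.Ioo (0:ℝ) R, HasDerivAt (deriv w) (deriv (deriv w) r) r) →
      ∀ g : ℝ → ℝ, (∀ r ∈ Set.Ioo (0:ℝ) R, deriv (deriv w) r + ((N:ℝ)-1)/r * deriv w r = g r) →
      ∀ r ∈ Set.Ioo (0:ℝ) R, HasDerivAt (fun s => s^(N-1) * deriv w s) (r^(N-1) * g r) r := by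
    intro w hdw g hgw r hr
    have h1 : HasDerivAt (fun s => s^(N-1) * deriv w s)
        (((N-1 : ℕ):ℝ) * r^(N-1-1) * deriv w r + r^(N-1) * deriv (deriv w) r) r :=
      (hasDerivAt_pow (N-1) r).mul (hdw r hr)
    convert h1 using 1
    have hr0 : r ≠ 0 := ne_of_gt hr.1
    have heq := hgw r hr
    have heq2 : deriv (deriv w) r = g r - ((N:ℝ)-1)/r * deriv w r := by linarith
    rw [hcast, heq2, show N-1-1 = N-2 from rfl,
      show N - 1 = (N-2) + 1 from by omega, pow_succ]
    field_simp
    ring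
  -- u' > 0 on (0, R)
  have hu'pos : ∀ r ∈ Set.Ioo (0:ℝ) R, 0 < deriv u r := by
    have key := pos_of_deriv_pos (R := R)
      (fun s => s^(N-1) * derivWithin u (Set.Ico 0 R) s)
      (((continuous_pow (N-1)).continuousOn).mul hu1c)
      (by simp [zero_pow (show N - 1 ≠ 0 by omega)])
      (by
        intro x hx
        refine ⟨x^(N-1) * v x ^ p, ?_, ?_⟩
        · exact mul_pos (pow_pos hx.1 _) (Real.rpow_pos_of_pos (hpos x (hIO hx)).2 p)
        · refine (hWd u hdu _ hequ x hx).congr_of_eventuallyEq ?_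
          filter_upwards [isOpen_Ioo.mem_nhds hx] with y hy
          rw [hu1 y hy])
    intro r hr
    have h : 0 < r^(N-1) * derivWithin u (Set.Ico 0 R) r := key r hr
    rw [hu1 r hr] at h
    have hpow : (0:ℝ) < r^(N-1) := pow_pos hr.1 _
    nlinarith
  -- v' > 0 on (0, R)
  have hv'pos : ∀ r ∈ Set.Ioo (0:ℝ) R, 0 < deriv v r := by
    have key := pos_of_deriv_pos (R := R)
      (fun s => s^(N-1) * derivWithin v (Set.Ico 0 R) s)
      (((continuous_pow (N-1)).continuousOn).mul hv1c)
      (by simp [zero_pow (show N - 1 ≠ 0 by omega)])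
      (by
        intro x hx
        refine ⟨x^(N-1) * f |deriv u x|, ?_, ?_⟩
        · refine mul_pos (pow_pos hx.1 _) (hfpos _ ?_)
          rw [abs_of_pos (hu'pos x hx)]; exact hu'pos x hx
        · refine (hWd v hdv _ heqv x hx).congr_of_eventuallyEq ?_
          filter_upwards [isOpen_Ioo.mem_nhds hx] with y hy
          rw [hv1 y hy])
    intro r hr
    have h : 0 < r^(N-1) * derivWithin v (Set.Ico 0 R) r := key r hr
    rw [hv1 r hr] at h
    have hpow : (0:ℝ) < r^(N-1) := pow_pos hr.1 _
    nlinarith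
  have hvat : ∀ r ∈ Set.Ioo (0:ℝ) R, HasDerivAt v (deriv v r) r := by
    intro r hr
    exact (((hv.mono hIO).contDiffAt (isOpen_Ioo.mem_nhds hr)).differentiableAt
      (by norm_num)).hasDerivAt
  -- the key inequality  r^(N-1) u'(r) ≤ r^N v(r)^p / N
  have hG : ∀ r ∈ Set.Ioo (0:ℝ) R,
      r^(N-1) * deriv u r < r^N * v r ^ p / N := by
    have key := pos_of_deriv_pos (R := R)
      (fun s => s^N * v s ^ p / N - s^(N-1) * derivWithin u (Set.Ico 0 R) s)
      ((((continuous_pow N).continuousOn.mul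
        ((hv.continuousOn).rpow_const fun x hx => Or.inl (ne_of_gt (hpos x hx).2))).div_const _).sub
        (((continuous_pow (N-1)).continuousOn).mul hu1c))
      (by simp [zero_pow (show N ≠ 0 by omega), zero_pow (show N - 1 ≠ 0 by omega)])
      (by
        intro r hr
        have hvp : HasDerivAt (fun s => v s ^ p) (deriv v r * p * v r ^ (p-1)) r :=
          (hvat r hr).rpow_const (Or.inl (ne_of_gt (hpos r (hIO hr)).2))
        have h2 : HasDerivAt (fun s => s^N * v s ^ p / N)
            (((N:ℝ) * r^(N-1) * v r ^ p + r^N * (deriv v r * p * v r ^ (p-1))) / N) r :=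
          ((hasDerivAt_pow N r).mul hvp).div_const N
        have h3 := hWd u hdu _ hequ r hr
        refine ⟨r^N * (deriv v r * p * v r ^ (p-1)) / N, ?_, ?_⟩
        · have := Real.rpow_pos_of_pos (hpos r (hIO hr)).2 (p-1)
          have := hv'pos r hr
          have := pow_pos hr.1 N
          positivity
        · refine ((h2.sub h3).congr_of_eventuallyEq ?_).congr_deriv ?_
          · filter_upwards [isOpen_Ioo.mem_nhds hr] with y hy
            rw [hu1 y hy]; rfl
          · field_simp
            ring)
    intro r hr
    have h : 0 < r^N * v r ^ p / N - r^(N-1) * derivWithin u (Set.Ico 0 R) r := key r hr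
    rw [hu1 r hr] at h
    linarith
  -- bounds for u''
  have hu'' : ∀ r ∈ Set.Ioo (0:ℝ) R,
      v r ^ p / N ≤ deriv (deriv u) r ∧ deriv (deriv u) r ≤ v r ^ p := by
    intro r hr
    have heq := hequ r hr
    have hr0 : r ≠ 0 := ne_of_gt hr.1
    have hpow : (0:ℝ) < r^(N-1) := pow_pos hr.1 _
    have hA : deriv u r < r * v r ^ p / N := by
      have h2 := hG r hr
      have hpowN : r^N = r^(N-1) * r := by
        rw [← pow_succ]; congr 1; omega
      rw [hpowN] at h2
      have h3 : r^(N-1) * deriv u r < r^(N-1) * (r * v r ^ p / N) := by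
        calc r^(N-1) * deriv u r < r^(N-1) * r * v r ^ p / N := h2
          _ = r^(N-1) * (r * v r ^ p / N) := by ring
      exact lt_of_mul_lt_mul_left h3 hpow.le
    have hc : 0 < ((N:ℝ)-1)/r := div_pos (by linarith) hr.1
    have hterm : ((N:ℝ)-1)/r * deriv u r ≤ ((N:ℝ)-1) * (v r ^ p) / N := by
      calc ((N:ℝ)-1)/r * deriv u r ≤ ((N:ℝ)-1)/r * (r * v r ^ p / N) :=
            mul_le_mul_of_nonneg_left hA.le hc.le
        _ = ((N:ℝ)-1) * (v r ^ p) / N := by field_simp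
    have hupos := hu'pos r hr
    have hvp0 : 0 < v r ^ p := Real.rpow_pos_of_pos (hpos r (hIO hr)).2 p
    have hidentity : ((N:ℝ)-1) * (v r ^ p)/N = v r ^ p - v r ^ p / N := by
      field_simp
    constructor
    · linarith
    · nlinarith [mul_pos hc hupos]
  have hu''pos : ∀ r ∈ Set.Ioo (0:ℝ) R, 0 < deriv (deriv u) r := by
    intro r hr
    have hvp0 : 0 < v r ^ p := Real.rpow_pos_of_pos (hpos r (hIO hr)).2 p
    have := (hu'' r hr).1
    have hNpos : (0:ℝ) < N := by linarith
    have := div_pos hvp0 hNpos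
    linarith
  -- nonnegativity of u' on all of [0, R)
  have hu1nonneg : ∀ x ∈ Set.Ico (0:ℝ) R, 0 ≤ derivWithin u (Set.Ico 0 R) x := by
    intro x hx
    rcases eq_or_lt_of_le hx.1 with h | h
    · have hc : ContinuousWithinAt (derivWithin u (Set.Ico 0 R)) (Set.Ico 0 R) 0 :=
        hu1c 0 ⟨le_refl 0, hR⟩
      have ht : Filter.Tendsto (derivWithin u (Set.Ico 0 R)) (𝓝[Set.Ioo 0 R] 0)
          (𝓝 (derivWithin u (Set.Ico 0 R) 0)) :=
        hc.tendsto.mono_left (nhdsWithin_mono _ hIO)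
      have hnb : (𝓝[Set.Ioo (0:ℝ) R] 0).NeBot :=
        mem_closure_iff_nhdsWithin_neBot.1
          (by rw [closure_Ioo hR.ne]; exact ⟨le_refl 0, hR.le⟩)
      rw [← h]
      refine ge_of_tendsto ht ?_
      filter_upwards [self_mem_nhdsWithin] with y hy
      rw [hu1 y hy]
      exact (hu'pos y hy).le
    · rw [hu1 x ⟨h, hx.2⟩]
      exact (hu'pos x ⟨h, hx.2⟩).le
  have hfu1c : ContinuousOn (fun s => f (derivWithin u (Set.Ico 0 R) s)) (Set.Ico 0 R) :=
    hf.continuousOn.comp hu1c fun x hx => hu1nonneg x hx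
  -- the key inequality  r^(N-1) v'(r) ≤ r^N f(u'(r)) / N
  have hH : ∀ r ∈ Set.Ioo (0:ℝ) R,
      r^(N-1) * deriv v r ≤ r^N * f (deriv u r) / N := by
    have key := nonneg_of_deriv_nonneg (R := R)
      (fun s => s^N * f (derivWithin u (Set.Ico 0 R) s) / N
        - s^(N-1) * derivWithin v (Set.Ico 0 R) s)
      ((((continuous_pow N).continuousOn.mul hfu1c).div_const _).sub
        (((continuous_pow (N-1)).continuousOn).mul hv1c))
      (by simp [zero_pow (show N ≠ 0 by omega), zero_pow (show N - 1 ≠ 0 by omega)])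
      (by
        intro r hr
        have hupos := hu'pos r hr
        have hIci : Set.Ici (0:ℝ) ∈ 𝓝 (deriv u r) :=
          Filter.mem_of_superset (Ioi_mem_nhds hupos) Set.Ioi_subset_Ici_self
        have hfd : HasDerivAt f (deriv f (deriv u r)) (deriv u r) :=
          ((hf.contDiffAt hIci).differentiableAt one_ne_zero).hasDerivAt
        have hcomp : HasDerivAt (fun s => f (deriv u s))
            (deriv f (deriv u r) * deriv (deriv u) r) r := hfd.comp r (hdu r hr)
        have h2 : HasDerivAt (fun s => s^N * f (deriv u s) / N)
            (((N:ℝ) * r^(N-1) * f (deriv u r)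
              + r^N * (deriv f (deriv u r) * deriv (deriv u) r)) / N) r :=
          ((hasDerivAt_pow N r).mul hcomp).div_const N
        have h3 := hWd v hdv _ heqv r hr
        rw [abs_of_pos hupos] at h3
        refine ⟨r^N * (deriv f (deriv u r) * deriv (deriv u) r) / N, ?_, ?_⟩
        · have hdf := slope_deriv_nonneg f hfmono hupos hfd
          exact div_nonneg (mul_nonneg (pow_nonneg hr.1.le N)
            (mul_nonneg hdf (hu''pos r hr).le)) (by linarith)
        · refine ((h2.sub h3).congr_of_eventuallyEq ?_).congr_deriv ?_
          · filter_upwards [isOpen_Ioo.mem_nhds hr] with y hy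
            rw [hu1 y hy, hv1 y hy]; rfl
          · field_simp
            ring)
    intro r hr
    have h : 0 ≤ r^N * f (derivWithin u (Set.Ico 0 R) r) / N
        - r^(N-1) * derivWithin v (Set.Ico 0 R) r := key r hr
    rw [hu1 r hr, hv1 r hr] at h
    linarith
  -- conclusion
  intro r hr
  have h1 := hu'pos r hr
  have h2 := hv'pos r hr
  refine ⟨h1, h2, (hu'' r hr).1, (hu'' r hr).2, ?_, ?_⟩ <;>
  · have heq := heqv r hr
    rw [abs_of_pos h1] at heq
    have hr0 : r ≠ 0 := ne_of_gt hr.1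
    have hpow : (0:ℝ) < r^(N-1) := pow_pos hr.1 _
    have hB : deriv v r ≤ r * f (deriv u r) / N := by
      have h3 := hH r hr
      have hpowN : r^N = r^(N-1) * r := by
        rw [← pow_succ]; congr 1; omega
      rw [hpowN] at h3
      have h4 : r^(N-1) * deriv v r ≤ r^(N-1) * (r * f (deriv u r) / N) := by
        calc r^(N-1) * deriv v r ≤ r^(N-1) * r * f (deriv u r) / N := h3
          _ = r^(N-1) * (r * f (deriv u r) / N) := by ring
      exact le_of_mul_le_mul_left h4 hpow
    have hc : 0 < ((N:ℝ)-1)/r := div_pos (by linarith) hr.1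
    have hterm : ((N:ℝ)-1)/r * deriv v r ≤ ((N:ℝ)-1) * f (deriv u r) / N := by
      calc ((N:ℝ)-1)/r * deriv v r ≤ ((N:ℝ)-1)/r * (r * f (deriv u r) / N) :=
            mul_le_mul_of_nonneg_left hB hc.le
        _ = ((N:ℝ)-1) * f (deriv u r) / N := by field_simp
    have hfpos' : 0 < f (deriv u r) := hfpos _ h1
    have hidentity : ((N:ℝ)-1) * f (deriv u r) / N = f (deriv u r) - f (deriv u r) / N := by
      field_simp
    first
    | linarith
    | nlinarith [mul_pos hc h2]
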